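/- Let x be a real obs × vars matrix whose columns are all nonzero, let y ∈ ℝ^obs, and let (a^k) be a sequence produced by iterating the SolveBak update with column choices j_k. If ⟨x_{j_k}, y - x a^k⟩ ≠ 0 at step k, then ‖y - x a^{k+1}‖² < ‖y - x a^k‖²; in particular, strict decrease of the squared residual occurs at step k if and only if the current residual is not orthogonal to the chosen column x_{j_k}. -/

import Mathlib

open scoped RealInnerProductSpace BigOperators

/-- The `j`-th column of the matrix `x`, as a vector in Euclidean space. -/
def col {obs vars : ℕ} (x : Matrix (Fin obs) (Fin vars) ℝ) (j : Fin vars) :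
    EuclideanSpace ℝ (Fin obs) :=
  WithLp.toLp 2 (fun i => x i j)

/-- The residual `y - x a` of the linear system `x a = y`, as a vector in Euclidean space. -/
def resid {obs vars : ℕ} (x : Matrix (Fin obs) (Fin vars) ℝ)
    (y : Fin obs → ℝ) (a : Fin vars → ℝ) : EuclideanSpace ℝ (Fin obs) :=
  WithLp.toLp 2 (fun i => y i - x.mulVec a i)

lemma resid_update {obs vars : ℕ} (x : Matrix (Fin obs) (Fin vars) ℝ)
    (y : Fin obs → ℝ) (a : Fin vars → ℝ) (j : Fin vars) (c : ℝ) :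
    resid x y (Function.update a j (a j + c)) = resid x y a - c • col x j := by
  have h : Function.update a j (a j + c) = a + Pi.single j c := by
    funext j'
    by_cases h : j' = j
    · subst h; simp
    · simp [Function.update_of_ne h, Pi.single_eq_of_ne h]
  ext i
  simp only [resid, h, Matrix.mulVec_add, Matrix.mulVec_single]
  show y i - (x.mulVec a i + x i j * c) = (y i - x.mulVec a i) - c * x i j
  ring

theorem solvebak_strict_decrease_iff (obs vars : ℕ) (hobs : 0 < obs) (hvars : 0 < vars)
    (x : Matrix (Fin obs) (Fin vars) ℝ) (hcols : ∀ j, col x j ≠ 0)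
    (y : Fin obs → ℝ)
    (a : ℕ → Fin vars → ℝ) (jseq : ℕ → Fin vars) (da : ℕ → ℝ)
    (hda : ∀ k, da k =
      ⟪col x (jseq k), resid x y (a k)⟫ / ⟪col x (jseq k), col x (jseq k)⟫)
    (hstep : ∀ k, a (k + 1) = Function.update (a k) (jseq k) (a k (jseq k) + da k)) :
    ∀ k : ℕ,
      (⟪col x (jseq k), resid x y (a k)⟫ ≠ 0 →
        ‖resid x y (a (k + 1))‖ ^ 2 < ‖resid x y (a k)‖ ^ 2) ∧
      (‖resid x y (a (k + 1))‖ ^ 2 < ‖resid x y (a k)‖ ^ 2 ↔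
        ⟪col x (jseq k), resid x y (a k)⟫ ≠ 0) := by
  intro k
  set v := col x (jseq k) with hv
  set r := resid x y (a k) with hr
  have hvv : ⟪v, v⟫ = ‖v‖ ^ 2 := real_inner_self_eq_norm_sq v
  have hvpos : (0:ℝ) < ‖v‖ ^ 2 := by
    exact pow_pos (norm_pos_iff.mpr (hcols (jseq k))) 2
  have hres : resid x y (a (k + 1)) = r - da k • v := by
    rw [hstep k, resid_update]
  have key : ‖resid x y (a (k+1))‖ ^ 2 = ‖r‖ ^ 2 - ⟪v, r⟫ ^ 2 / ‖v‖ ^ 2 := by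
    rw [hres, norm_sub_sq_real, norm_smul, real_inner_smul_right, hda k, hvv,
      real_inner_comm r v]
    rw [mul_pow, Real.norm_eq_abs, sq_abs]
    field_simp
    ring
  constructor
  · intro hne
    rw [key]
    have : (0:ℝ) < ⟪v, r⟫ ^ 2 / ‖v‖ ^ 2 := by positivity
    linarith
  · rw [key]
    constructor
    · intro h hc
      rw [hc] at h
      simp at h
    · intro hne
      have : (0:ℝ) < ⟪v, r⟫ ^ 2 / ‖v‖ ^ 2 := by positivity
      linarith
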